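/- Every unary language accepted by a shrinking cellular automaton in o(n) time is either finite or cofinite (as a subset of {1}⁺). -/

import Mathlib

/-- A shrinking cellular automaton over input alphabet `α`. -/
structure SCA (α : Type) where
  Q : Type
  fintypeQ : Fintype Q
  decEq : DecidableEq Q
  δ : Q → Q → Q → Q
  q : Q
  del : Q
  embed : α → Q
  accept : Q → Bool
  del_ne_q : del ≠ q
  inactive : ∀ a b, δ a q b = q
  embed_ne_q : ∀ x, embed x ≠ q

namespace SCA
variable {α : Type} (S : SCA α)

/-- One application of the local rule to every cell (boundary cells see the
inactive state). -/
def raw (w : List S.Q) : List S.Q :=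
  (List.range w.length).map fun i =>
    S.δ (if i = 0 then S.q else w.getD (i - 1) S.q) (w.getD i S.q) (w.getD (i + 1) S.q)

/-- The shrinking global transition: apply the local rule, then delete all
cells in the delete state. -/
def step (w : List S.Q) : List S.Q :=
  haveI := S.decEq
  (S.raw w).filter (fun c => decide (c ≠ S.del))

/-- Configuration reached from input `w` after `t` shrinking transitions. -/
def conf (w : List α) (t : ℕ) : List S.Q := S.step^[t] (w.map S.embed)

/-- `S` accepts `w` at step `t`: the leftmost active cell is accepting. -/
def AcceptsAt (w : List α) (t : ℕ) : Prop :=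
  haveI := S.decEq
  ∃ a, ((S.conf w t).dropWhile (fun c => decide (c = S.q))).head? = some a ∧
    S.accept a = true

/-- The language accepted by `S`. -/
def Lang : Set (List α) := {w | ∃ t, S.AcceptsAt w t}

end SCA

/-- `L ∈ SCA[O(T)]`. -/
def InSCA {α : Type} (L : Set (List α)) (T : ℕ → ℕ) : Prop :=
  ∃ (S : SCA α) (C : ℕ), S.Lang = L ∧
    ∀ w ∈ L, ∃ t ≤ C * T w.length + C, S.AcceptsAt w t

/-- `L ∈ SCA[o(n)]`. -/
def InSCAo {α : Type} (L : Set (List α)) : Prop :=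
  ∃ (S : SCA α) (T : ℕ → ℕ), S.Lang = L ∧
    (∀ w ∈ L, ∃ t ≤ T w.length, S.AcceptsAt w t) ∧
    (∀ ε : ℝ, 0 < ε → ∀ᶠ n in Filter.atTop, (T n : ℝ) ≤ ε * n)

namespace SCAux
open List

variable {α : Type}

lemma raw_length (S : SCA α) (w : List S.Q) : (S.raw w).length = w.length := by
  simp [SCA.raw]

lemma raw_getElem (S : SCA α) (w : List S.Q) (i : ℕ) (h : i < (S.raw w).length) :
    (S.raw w)[i] =
      S.δ (if i = 0 then S.q else w.getD (i - 1) S.q) (w.getD i S.q) (w.getD (i + 1) S.q) := by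
  simp [SCA.raw]

lemma raw_split (S : SCA α) (a b : List S.Q) (m : S.Q) (k : ℕ) (hk : 2 ≤ k) :
    S.raw (a ++ (List.replicate k m ++ b)) =
      (S.raw (a ++ [m, m])).take (a.length + 1) ++
        (List.replicate (k - 2) (S.δ m m m) ++ (S.raw ([m, m] ++ b)).drop 1) := by
  set la := a.length with hla
  have h1 : ∀ j : ℕ, (a ++ (List.replicate k m ++ b)).getD j S.q =
      if j < la then a.getD j S.q
      else if j < la + k then m else b.getD (j - (la + k)) S.q := by
    intro j
    by_cases hj : j < la
    · rw [getD_append _ _ _ _ (by omega), if_pos hj]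
    · rw [getD_append_right _ _ _ _ (by omega), if_neg hj]
      by_cases hj2 : j < la + k
      · rw [getD_append _ _ _ _ (by simp; omega), if_pos hj2,
          getD_eq_getElem _ _ (by simp; omega), getElem_replicate]
      · rw [getD_append_right _ _ _ _ (by simp; omega), if_neg hj2]
        congr 1
        simp; omega
  have h2 : ∀ j : ℕ, (a ++ [m, m]).getD j S.q =
      if j < la then a.getD j S.q else if j < la + 2 then m else S.q := by
    intro j
    by_cases hj : j < la
    · rw [getD_append _ _ _ _ (by omega), if_pos hj]
    · rw [getD_append_right _ _ _ _ (by omega), if_neg hj]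
      by_cases hj2 : j < la + 2
      · rw [if_pos hj2]
        have : j - la = 0 ∨ j - la = 1 := by omega
        rcases this with h | h <;> rw [h] <;> rfl
      · rw [if_neg hj2, getD_eq_default _ _ (by simp; omega)]
  have h3 : ∀ j : ℕ, ([m, m] ++ b).getD j S.q =
      if j < 2 then m else b.getD (j - 2) S.q := by
    intro j
    by_cases hj : j < 2
    · rw [getD_append _ _ _ _ (by simp; omega), if_pos hj]
      have : j = 0 ∨ j = 1 := by omega
      rcases this with h | h <;> rw [h] <;> rfl
    · rw [getD_append_right _ _ _ _ (by simp; omega), if_neg hj]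
      simp
  have hL : ((S.raw (a ++ [m, m])).take (la + 1)).length = la + 1 := by
    simp [raw_length]; omega
  have hM : (List.replicate (k - 2) (S.δ m m m)).length = k - 2 := by simp
  apply List.ext_getElem
  · simp [raw_length]; omega
  · intro i hi₁ hi₂
    have hlen : i < la + k + b.length := by
      have := hi₁; rw [raw_length] at this; simp at this; omega
    rw [raw_getElem]
    rw [List.getElem_append]
    by_cases hi : i < ((S.raw (a ++ [m, m])).take (la + 1)).length
    · rw [dif_pos hi]
      have hile : i < la + 1 := by omega
      rw [List.getElem_take, raw_getElem]
      congr 1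
      · by_cases h0 : i = 0
        · rw [if_pos h0, if_pos h0]
        · rw [if_neg h0, if_neg h0, h1 (i - 1), h2 (i - 1)]
          split_ifs <;> first | rfl | omega
      · rw [h1 i, h2 i]
        split_ifs <;> first | rfl | omega
      · rw [h1 (i + 1), h2 (i + 1)]
        split_ifs <;> first | rfl | omega
    · rw [dif_neg hi]
      rw [List.getElem_append]
      have hige : la + 1 ≤ i := by omega
      by_cases hmid : i - ((S.raw (a ++ [m, m])).take (la + 1)).length <
          (List.replicate (k - 2) (S.δ m m m)).length
      · rw [dif_pos hmid]
        have hi2 : i < la + k - 1 := by rw [hL] at hmid; rw [hM] at hmid; omega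
        rw [List.getElem_replicate]
        rw [if_neg (by omega), h1 (i - 1), h1 i, h1 (i + 1)]
        split_ifs <;> first | rfl | omega
      · rw [dif_neg hmid]
        have hi2 : la + k - 1 ≤ i := by rw [hL] at hmid; rw [hM] at hmid; omega
        rw [List.getElem_drop, raw_getElem]
        have hx : 1 + (i - ((S.raw (a ++ [m, m])).take (la + 1)).length -
            (List.replicate (k - 2) (S.δ m m m)).length) = i - (la + k - 1) + 1 := by
          rw [hL, hM]; omega
        rw [hx]
        rw [if_neg (by omega), if_neg (by omega)]
        congr 1
        · rw [h1 (i - 1), h3 (i - (la + k - 1) + 1 - 1)]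
          split_ifs <;> first | rfl | omega | (congr 1; omega)
        · rw [h1 i, h3 (i - (la + k - 1) + 1)]
          split_ifs <;> first | rfl | omega | (congr 1; omega)
        · rw [h1 (i + 1), h3 (i - (la + k - 1) + 1 + 1)]
          split_ifs <;> first | rfl | omega | (congr 1; omega)

end SCAux


namespace SCAux
open List

variable {α : Type}

/-- The "not deleted" predicate. -/
def dp (S : SCA α) : S.Q → Bool := fun c => haveI := S.decEq; decide (c ≠ S.del)

/-- The "quiescent" predicate. -/
def qp (S : SCA α) : S.Q → Bool := fun c => haveI := S.decEq; decide (c = S.q)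

lemma dp_iff (S : SCA α) (c : S.Q) : dp S c = true ↔ c ≠ S.del := by
  letI := S.decEq; simp [dp]

lemma step_eq (S : SCA α) (w : List S.Q) : S.step w = (S.raw w).filter (dp S) := rfl

lemma acceptsAt_def (S : SCA α) (w : List α) (t : ℕ) :
    S.AcceptsAt w t ↔
      ∃ a, ((S.conf w t).dropWhile (qp S)).head? = some a ∧ S.accept a = true := Iff.rfl

/-- The bulk state sequence. -/
def bulk (S : SCA α) (m : S.Q) : ℕ → S.Q
  | 0 => m
  | t + 1 => S.δ (bulk S m t) (bulk S m t) (bulk S m t)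

/-- The left border sequence. -/
def lf (S : SCA α) (m : S.Q) : ℕ → List S.Q
  | 0 => []
  | t + 1 =>
      ((S.raw (lf S m t ++ [bulk S m t, bulk S m t])).take ((lf S m t).length + 1)).filter (dp S)

/-- The right border sequence. -/
def rt (S : SCA α) (m : S.Q) : ℕ → List S.Q
  | 0 => []
  | t + 1 => ((S.raw ([bulk S m t, bulk S m t] ++ rt S m t)).drop 1).filter (dp S)

lemma step_split (S : SCA α) (a b : List S.Q) (m : S.Q) (k : ℕ) (hk : 2 ≤ k) :
    S.step (a ++ (List.replicate k m ++ b)) =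
      ((S.raw (a ++ [m, m])).take (a.length + 1)).filter (dp S) ++
        ((if dp S (S.δ m m m) = true then List.replicate (k - 2) (S.δ m m m) else []) ++
          ((S.raw ([m, m] ++ b)).drop 1).filter (dp S)) := by
  rw [step_eq, raw_split S a b m k hk, filter_append, filter_append, filter_replicate]

lemma iter_split (S : SCA α) (m : S.Q) (n t : ℕ)
    (hA : ∀ s < t, bulk S m (s + 1) ≠ S.del) (hn : 2 * t ≤ n) :
    S.step^[t] (List.replicate n m) =
      lf S m t ++ (List.replicate (n - 2 * t) (bulk S m t) ++ rt S m t) := by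
  induction t with
  | zero => simp [lf, rt, bulk]
  | succ t ih =>
    rw [Function.iterate_succ_apply',
      ih (fun s hs => hA s (by omega)) (by omega),
      step_split S _ _ _ _ (by omega)]
    have hd : dp S (S.δ (bulk S m t) (bulk S m t) (bulk S m t)) = true :=
      (dp_iff S _).mpr (hA t (by omega))
    rw [if_pos hd]
    have hc : n - 2 * t - 2 = n - 2 * (t + 1) := by omega
    rw [hc]
    simp only [lf, rt, bulk]

lemma key_drop {β : Type} (p : β → Bool) (b : List β) (m : β) (j : ℕ) (hj : 0 < j) :
    ((List.replicate j m ++ b).dropWhile p).head? =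
      if p m = true then (b.dropWhile p).head? else some m := by
  obtain ⟨j', rfl⟩ : ∃ j', j = j' + 1 := ⟨j - 1, by omega⟩
  rw [dropWhile_append, dropWhile_replicate]
  by_cases hm : p m = true
  · simp [hm]
  · simp [hm, replicate_succ]

lemma head?_dropWhile_rep {β : Type} (p : β → Bool) (a b : List β) (m : β) (k k' : ℕ)
    (hk : 0 < k) (hk' : 0 < k') :
    ((a ++ (List.replicate k m ++ b)).dropWhile p).head? =
      ((a ++ (List.replicate k' m ++ b)).dropWhile p).head? := by
  conv_lhs => rw [dropWhile_append]
  conv_rhs => rw [dropWhile_append]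
  by_cases ha : (a.dropWhile p).isEmpty = true
  · rw [if_pos ha, if_pos ha, key_drop p b m k hk, key_drop p b m k' hk']
  · rw [if_neg ha, if_neg ha]
    conv_lhs => rw [head?_append]
    conv_rhs => rw [head?_append]
    obtain ⟨x, hx⟩ : ∃ x, (a.dropWhile p).head? = some x := by
      cases hh : a.dropWhile p with
      | nil => rw [hh] at ha; simp at ha
      | cons y l => exact ⟨y, by simp [hh]⟩
    rw [hx]
    rfl

lemma conf_rep (S : SCA Unit) (n t : ℕ) :
    S.conf (List.replicate n ()) t = S.step^[t] (List.replicate n (S.embed ())) := by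
  simp [SCA.conf]

lemma conf_add (S : SCA Unit) (w : List Unit) (u v : ℕ) :
    S.conf w (u + v) = S.step^[u] (S.conf w v) :=
  Function.iterate_add_apply _ _ _ _

lemma acceptsAt_iff_of (S : SCA Unit) (t : ℕ)
    (hA : ∀ s < t, bulk S (S.embed ()) (s + 1) ≠ S.del) (n n' : ℕ)
    (hn : 2 * t + 1 ≤ n) (hn' : 2 * t + 1 ≤ n') :
    (S.AcceptsAt (List.replicate n ()) t ↔ S.AcceptsAt (List.replicate n' ()) t) := by
  have e : ∀ nn : ℕ, 2 * t + 1 ≤ nn →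
      S.conf (List.replicate nn ()) t =
        lf S (S.embed ()) t ++
          (List.replicate (nn - 2 * t) (bulk S (S.embed ()) t) ++ rt S (S.embed ()) t) := by
    intro nn h
    rw [conf_rep, iter_split S _ _ _ hA (by omega)]
  have hh : ((S.conf (List.replicate n ()) t).dropWhile (qp S)).head? =
      ((S.conf (List.replicate n' ()) t).dropWhile (qp S)).head? := by
    rw [e n hn, e n' hn']
    exact head?_dropWhile_rep (qp S) _ _ _ _ _ (by omega) (by omega)
  rw [acceptsAt_def, acceptsAt_def, hh]

lemma confB (S : SCA Unit) (s₀ : ℕ)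
    (hmin : ∀ r < s₀, bulk S (S.embed ()) (r + 1) ≠ S.del)
    (hdel : bulk S (S.embed ()) (s₀ + 1) = S.del) (n n' : ℕ)
    (hn : 2 * s₀ + 2 ≤ n) (hn' : 2 * s₀ + 2 ≤ n') :
    ∀ t, s₀ + 1 ≤ t → S.conf (List.replicate n ()) t = S.conf (List.replicate n' ()) t := by
  have base : S.conf (List.replicate n ()) (s₀ + 1) = S.conf (List.replicate n' ()) (s₀ + 1) := by
    rw [conf_rep, conf_rep, Function.iterate_succ_apply', Function.iterate_succ_apply',
      iter_split S _ _ _ hmin (by omega), iter_split S _ _ _ hmin (by omega),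
      step_split S _ _ _ _ (by omega), step_split S _ _ _ _ (by omega)]
    have hd : dp S (S.δ (bulk S (S.embed ()) s₀) (bulk S (S.embed ()) s₀)
        (bulk S (S.embed ()) s₀)) = false := by
      have hdd : S.δ (bulk S (S.embed ()) s₀) (bulk S (S.embed ()) s₀) (bulk S (S.embed ()) s₀)
          = S.del := hdel
      letI := S.decEq
      simp [dp]
      exact hdd
    rw [hd]
    simp
  intro t ht
  have hts : t = (t - (s₀ + 1)) + (s₀ + 1) := by omega
  rw [hts, conf_add S (List.replicate n ()) (t - (s₀ + 1)) (s₀ + 1),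
    conf_add S (List.replicate n' ()) (t - (s₀ + 1)) (s₀ + 1), base]

lemma unary_eq (w : List Unit) : w = List.replicate w.length () :=
  List.eq_replicate_iff.mpr ⟨rfl, fun b _ => rfl⟩

lemma finite_short (K : ℕ) : {w : List Unit | w.length < K}.Finite := by
  apply Set.Finite.subset ((Set.finite_Iio K).image (fun k => List.replicate k ()))
  intro w hw
  exact ⟨w.length, hw, (unary_eq w).symm⟩

end SCAux

/-- Every unary language accepted by an SCA in sublinear time is finite or
cofinite (as a subset of the nonempty unary words). -/
theorem sca_unary_finite_or_cofinite (L : Set (List Unit))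
    (hne : ∀ w ∈ L, w ≠ []) (h : InSCAo L) :
    L.Finite ∨ ({w : List Unit | w ≠ []} \ L).Finite := by
  classical
  obtain ⟨S, T, hLang, hTime, hSub⟩ := h
  by_cases hA : ∀ s : ℕ, SCAux.bulk S (S.embed ()) (s + 1) ≠ S.del
  · -- the bulk state is never deleted
    by_cases hfin : L.Finite
    · exact Or.inl hfin
    right
    obtain ⟨N, hN⟩ := Filter.eventually_atTop.mp (hSub (1 / 3) (by norm_num))
    have hex : ∃ w ∈ L, max N 1 ≤ w.length := by
      by_contra hc
      push_neg at hc
      exact hfin ((SCAux.finite_short (max N 1)).subset fun w hw => hc w hw)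
    obtain ⟨w, hwL, hwlen⟩ := hex
    obtain ⟨t, htT, hacc⟩ := hTime w hwL
    have h3t : 3 * t ≤ w.length := by
      have h1 : (T w.length : ℝ) ≤ (1 / 3) * w.length :=
        hN w.length (le_trans (le_max_left _ _) hwlen)
      have h2 : (t : ℝ) ≤ (T w.length : ℝ) := by exact_mod_cast htT
      have h3 : ((3 * t : ℕ) : ℝ) ≤ (w.length : ℝ) := by push_cast; linarith
      exact_mod_cast h3
    have hn1 : 1 ≤ w.length := le_trans (le_max_right _ _) hwlen
    have hnt : 2 * t + 1 ≤ w.length := by omega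
    have haccn : S.AcceptsAt (List.replicate w.length ()) t := by
      rw [← SCAux.unary_eq w]; exact hacc
    apply (SCAux.finite_short (2 * t + 1)).subset
    rintro v ⟨hvne, hvnotL⟩
    by_contra hvlen
    simp only [Set.mem_setOf_eq, not_lt] at hvlen
    apply hvnotL
    rw [← hLang]
    refine ⟨t, ?_⟩
    rw [SCAux.unary_eq v]
    exact (SCAux.acceptsAt_iff_of S t (fun s _ => hA s) w.length v.length hnt hvlen).mp haccn
  · -- the bulk state is eventually deleted
    push_neg at hA
    have hP : ∃ s, SCAux.bulk S (S.embed ()) (s + 1) = S.del := hA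
    set s₀ := Nat.find hP with hs₀
    have hdel : SCAux.bulk S (S.embed ()) (s₀ + 1) = S.del := Nat.find_spec hP
    have hmin : ∀ r < s₀, SCAux.bulk S (S.embed ()) (r + 1) ≠ S.del :=
      fun r hr => Nat.find_min hP hr
    have hsym : ∀ n n' : ℕ, 2 * s₀ + 2 ≤ n → 2 * s₀ + 2 ≤ n' → ∀ t,
        S.AcceptsAt (List.replicate n ()) t → S.AcceptsAt (List.replicate n' ()) t := by
      intro n n' hn hn' t hacc
      by_cases htle : t ≤ s₀
      · exact (SCAux.acceptsAt_iff_of S t (fun r hr => hmin r (by omega)) n n'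
          (by omega) (by omega)).mp hacc
      · have hconf := SCAux.confB S s₀ hmin hdel n n' hn hn' t (by omega)
        rw [SCAux.acceptsAt_def] at hacc ⊢
        rw [hconf] at hacc
        exact hacc
    have memiff : ∀ n n' : ℕ, 2 * s₀ + 2 ≤ n → 2 * s₀ + 2 ≤ n' →
        (List.replicate n () ∈ L ↔ List.replicate n' () ∈ L) := by
      intro n n' hn hn'
      rw [← hLang]
      constructor
      · rintro ⟨t, ht⟩; exact ⟨t, hsym n n' hn hn' t ht⟩
      · rintro ⟨t, ht⟩; exact ⟨t, hsym n' n hn' hn t ht⟩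
    by_cases hbig : List.replicate (2 * s₀ + 2) () ∈ L
    · right
      apply (SCAux.finite_short (2 * s₀ + 2)).subset
      rintro v ⟨hvne, hvnotL⟩
      by_contra hlen
      simp only [Set.mem_setOf_eq, not_lt] at hlen
      apply hvnotL
      rw [SCAux.unary_eq v]
      exact (memiff (2 * s₀ + 2) v.length le_rfl hlen).mp hbig
    · left
      apply (SCAux.finite_short (2 * s₀ + 2)).subset
      intro v hvL
      by_contra hlen
      simp only [Set.mem_setOf_eq, not_lt] at hlen
      apply hbig
      refine (memiff v.length (2 * s₀ + 2) hlen le_rfl).mp ?_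
      rw [← SCAux.unary_eq v]
      exact hvL
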